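/- arXiv:1505.03609 — 3 statements merged into one kernel-verified Lean document; each statement's English description precedes it below -/
import Mathlib

section
/- Let θ > 0, s ≥ 1, and for i = 1,…,n let y_i ∈ ℝ, u_i ∈ ℝ^s, and ω_i ≥ 0. Then for every ζ ∈ ℝ^s and every coordinate k, the second partial derivative of the exponential squared objective satisfies ∂²Q/∂ζ_k²(ζ) ≥ −(2/θ) Σ_{i=1}^n ω_i u_{ik}² exp(−r_i(ζ)²/θ); in particular the right-hand side is always non-positive. -/
open Finset

/-- The exponential squared objective
`Q(ζ) = ∑ i, ω i * exp (-(y i - u iᵀ ζ)² / θ)`. -/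
noncomputable def expSqObj (θ : ℝ) {n s : ℕ} (y : Fin n → ℝ) (u : Fin n → Fin s → ℝ)
    (ω : Fin n → ℝ) (ζ : Fin s → ℝ) : ℝ :=
  ∑ i, ω i * Real.exp (-(y i - ∑ k, u i k * ζ k) ^ 2 / θ)

noncomputable def expLin {s : ℕ} (c : Fin s → ℝ) : (Fin s → ℝ) →L[ℝ] ℝ :=
  ∑ m, c m • (ContinuousLinearMap.proj m : (Fin s → ℝ) →L[ℝ] ℝ)

lemma expLin_apply {s : ℕ} (c : Fin s → ℝ) (z : Fin s → ℝ) :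
    expLin c z = ∑ m, c m * z m := by
  simp [expLin, ContinuousLinearMap.sum_apply]

lemma expLin_single {s : ℕ} (c : Fin s → ℝ) (k : Fin s) :
    expLin c (Pi.single k 1) = c k := by
  rw [expLin_apply]; simp [Pi.single_apply, mul_ite]

lemma hasFDerivAt_res {s : ℕ} (c : Fin s → ℝ) (y : ℝ) (z : Fin s → ℝ) :
    HasFDerivAt (fun z : Fin s → ℝ => y - ∑ m, c m * z m) (-(expLin c)) z := by
  have heq : (fun z : Fin s → ℝ => ∑ m, c m * z m) = ⇑(expLin c) :=
    funext fun z => (expLin_apply c z).symm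
  have h' : HasFDerivAt (fun z : Fin s → ℝ => ∑ m, c m * z m) (expLin c) z := by
    rw [heq]; exact (expLin c).hasFDerivAt
  have h2 := (hasFDerivAt_const y z).sub h'
  rw [zero_sub] at h2
  exact h2

lemma hasDerivAt_phi (θ t : ℝ) : HasDerivAt (fun t : ℝ => Real.exp (-t^2/θ))
    ((-2*t/θ) * Real.exp (-t^2/θ)) t := by
  have h1 : HasDerivAt (fun t : ℝ => -t^2/θ) (-(2*t)/θ) t := by
    simpa using ((hasDerivAt_pow 2 t).neg.div_const θ)
  convert h1.exp using 1; ring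

lemma hasDerivAt_phi' (θ t : ℝ) : HasDerivAt (fun t : ℝ => (-2*t/θ) * Real.exp (-t^2/θ))
    ((4*t^2/θ^2 - 2/θ) * Real.exp (-t^2/θ)) t := by
  have h1 : HasDerivAt (fun t : ℝ => -2*t/θ) (-2/θ) t := by
    simpa using ((hasDerivAt_id t).const_mul (-2)).div_const θ
  exact (h1.mul (hasDerivAt_phi θ t)).congr_deriv (by ring)

lemma hasFDerivAt_Q (θ : ℝ) {n s : ℕ} (y : Fin n → ℝ) (u : Fin n → Fin s → ℝ)
    (ω : Fin n → ℝ) (z : Fin s → ℝ) :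
    HasFDerivAt (expSqObj θ y u ω)
      (∑ i, ω i • (((-2*(y i - ∑ m, u i m * z m)/θ) *
        Real.exp (-(y i - ∑ m, u i m * z m)^2/θ)) • (-(expLin (u i))))) z := by
  unfold expSqObj
  apply HasFDerivAt.fun_sum
  intro i _
  exact ((hasDerivAt_phi θ _).comp_hasFDerivAt z (hasFDerivAt_res (u i) (y i) z)).const_mul (ω i)

lemma partial_eq (θ : ℝ) {n s : ℕ} (y : Fin n → ℝ) (u : Fin n → Fin s → ℝ)
    (ω : Fin n → ℝ) (k : Fin s) :
    (fun z => fderiv ℝ (expSqObj θ y u ω) z (Pi.single k 1)) =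
    (fun z => ∑ i, (-(ω i * u i k)) * ((-2*(y i - ∑ m, u i m * z m)/θ) *
        Real.exp (-(y i - ∑ m, u i m * z m)^2/θ))) := by
  funext z
  rw [(hasFDerivAt_Q θ y u ω z).fderiv]
  simp only [ContinuousLinearMap.sum_apply, ContinuousLinearMap.smul_apply,
    ContinuousLinearMap.neg_apply, expLin_single, smul_eq_mul]
  exact Finset.sum_congr rfl fun i _ => by ring

theorem exp_sq_second_partial_lower_bound
    (θ : ℝ) (hθ : 0 < θ) (n s : ℕ) (hs : 1 ≤ s)
    (y : Fin n → ℝ) (u : Fin n → Fin s → ℝ) (ω : Fin n → ℝ) (hω : ∀ i, 0 ≤ ω i) :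
    ∀ (ζ : Fin s → ℝ) (k : Fin s),
      (fderiv ℝ (fun z => fderiv ℝ (expSqObj θ y u ω) z (Pi.single k 1)) ζ (Pi.single k 1) ≥
        -(2 / θ) * ∑ i, ω i * (u i k) ^ 2 *
          Real.exp (-(y i - ∑ m, u i m * ζ m) ^ 2 / θ)) ∧
      -(2 / θ) * (∑ i, ω i * (u i k) ^ 2 *
          Real.exp (-(y i - ∑ m, u i m * ζ m) ^ 2 / θ)) ≤ 0 := by
  intro ζ k
  have hsum_nonneg : 0 ≤ ∑ i, ω i * (u i k) ^ 2 *
      Real.exp (-(y i - ∑ m, u i m * ζ m) ^ 2 / θ) :=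
    Finset.sum_nonneg fun i _ => by have := hω i; positivity
  constructor
  · -- second derivative of G
    have hG : HasFDerivAt
        (fun z => ∑ i, (-(ω i * u i k)) * ((-2*(y i - ∑ m, u i m * z m)/θ) *
            Real.exp (-(y i - ∑ m, u i m * z m)^2/θ)))
        (∑ i, (-(ω i * u i k)) • (((4*(y i - ∑ m, u i m * ζ m)^2/θ^2 - 2/θ) *
            Real.exp (-(y i - ∑ m, u i m * ζ m)^2/θ)) • (-(expLin (u i))))) ζ := by
      apply HasFDerivAt.fun_sum
      intro i _
      exact ((hasDerivAt_phi' θ _).comp_hasFDerivAt ζ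
        (hasFDerivAt_res (u i) (y i) ζ)).const_mul (-(ω i * u i k))
    rw [partial_eq θ y u ω k, hG.fderiv]
    simp only [ContinuousLinearMap.sum_apply, ContinuousLinearMap.smul_apply,
      ContinuousLinearMap.neg_apply, expLin_single, smul_eq_mul]
    rw [Finset.mul_sum]
    apply Finset.sum_le_sum
    intro i _
    have hfac : (0:ℝ) ≤ ω i * u i k ^ 2 * Real.exp (-(y i - ∑ m, u i m * ζ m)^2/θ) := by
      have := hω i; positivity
    have hc : -(2/θ) ≤ 4*(y i - ∑ m, u i m * ζ m)^2/θ^2 - 2/θ := by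
      have : (0:ℝ) ≤ 4*(y i - ∑ m, u i m * ζ m)^2/θ^2 := by positivity
      linarith
    have := mul_le_mul_of_nonneg_left hc hfac
    calc -(2/θ) * (ω i * u i k ^ 2 * Real.exp (-(y i - ∑ m, u i m * ζ m)^2/θ))
        = (ω i * u i k ^ 2 * Real.exp (-(y i - ∑ m, u i m * ζ m)^2/θ)) * (-(2/θ)) := by ring
      _ ≤ (ω i * u i k ^ 2 * Real.exp (-(y i - ∑ m, u i m * ζ m)^2/θ)) *
            (4*(y i - ∑ m, u i m * ζ m)^2/θ^2 - 2/θ) := this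
      _ = -(ω i * u i k) * ((4*(y i - ∑ m, u i m * ζ m)^2/θ^2 - 2/θ) *
            Real.exp (-(y i - ∑ m, u i m * ζ m)^2/θ) * -u i k) := by ring
  · exact mul_nonpos_of_nonpos_of_nonneg (neg_nonpos.mpr (by positivity)) hsum_nonneg
end

section
/- Let θ > 0, s ≥ 1, and for i = 1,…,n let y_i ∈ ℝ, u_i ∈ ℝ^s, and ω_i ≥ 0, and let Q be the exponential squared objective. Then for all ζ, ζ⁰ ∈ ℝ^s, Q(ζ) ≥ Q(ζ⁰) + ∇Q(ζ⁰)ᵀ(ζ − ζ⁰) − (1/θ) Σ_{i=1}^n ω_i (u_iᵀ(ζ − ζ⁰))². -/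
open Finset

section scalar
variable {θ : ℝ}

private lemma hasDerivAt_aux (hθ : 0 < θ) (t : ℝ) :
    HasDerivAt (fun t : ℝ => Real.exp (-t ^ 2 / θ) + t ^ 2 / θ)
      (Real.exp (-t ^ 2 / θ) * (-(2 * t) / θ) + 2 * t / θ) t := by
  have h1 : HasDerivAt (fun t : ℝ => -t ^ 2 / θ) (-(2 * t) / θ) t := by
    simpa using ((hasDerivAt_pow 2 t).neg.div_const θ)
  have h2 : HasDerivAt (fun t : ℝ => t ^ 2 / θ) (2 * t / θ) t := by
    simpa using ((hasDerivAt_pow 2 t).div_const θ)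
  exact (h1.exp).add h2

private lemma hasDerivAt_aux' (hθ : 0 < θ) (t : ℝ) :
    HasDerivAt (fun t : ℝ => Real.exp (-t ^ 2 / θ) * (-(2 * t) / θ) + 2 * t / θ)
      (Real.exp (-t ^ 2 / θ) * (-(2 * t) / θ) * (-(2 * t) / θ)
        + Real.exp (-t ^ 2 / θ) * (-2 / θ) + 2 / θ) t := by
  have h1 : HasDerivAt (fun t : ℝ => -t ^ 2 / θ) (-(2 * t) / θ) t := by
    simpa using ((hasDerivAt_pow 2 t).neg.div_const θ)
  have h2 : HasDerivAt (fun t : ℝ => -(2 * t) / θ) (-2 / θ) t := by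
    have : HasDerivAt (fun t : ℝ => 2 * t) 2 t := by
      simpa using (hasDerivAt_id t).const_mul (2:ℝ)
    simpa using this.neg.div_const θ
  have h3 : HasDerivAt (fun t : ℝ => 2 * t / θ) (2 / θ) t := by
    have : HasDerivAt (fun t : ℝ => 2 * t) 2 t := by
      simpa using (hasDerivAt_id t).const_mul (2:ℝ)
    simpa using this.div_const θ
  exact ((h1.exp.mul h2).add h3)

private lemma convex_aux (hθ : 0 < θ) :
    ConvexOn ℝ Set.univ (fun t : ℝ => Real.exp (-t ^ 2 / θ) + t ^ 2 / θ) := by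
  have hd : ∀ t : ℝ, deriv (fun t : ℝ => Real.exp (-t ^ 2 / θ) + t ^ 2 / θ) t
      = Real.exp (-t ^ 2 / θ) * (-(2 * t) / θ) + 2 * t / θ :=
    fun t => (hasDerivAt_aux hθ t).deriv
  apply convexOn_univ_of_deriv2_nonneg
  · exact fun t => (hasDerivAt_aux hθ t).differentiableAt
  · intro t
    rw [funext hd]
    exact (hasDerivAt_aux' hθ t).differentiableAt
  · intro t
    have : deriv^[2] (fun t : ℝ => Real.exp (-t ^ 2 / θ) + t ^ 2 / θ) t
        = Real.exp (-t ^ 2 / θ) * (-(2 * t) / θ) * (-(2 * t) / θ)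
          + Real.exp (-t ^ 2 / θ) * (-2 / θ) + 2 / θ := by
      rw [Function.iterate_succ, Function.iterate_one, Function.comp_apply, funext hd]
      exact (hasDerivAt_aux' hθ t).deriv
    rw [this]
    have hE1 : Real.exp (-t ^ 2 / θ) ≤ 1 := by
      apply Real.exp_le_one_iff.mpr
      exact div_nonpos_of_nonpos_of_nonneg (neg_nonpos.mpr (by positivity)) hθ.le
    have hE0 : 0 < Real.exp (-t ^ 2 / θ) := Real.exp_pos _
    have heq : Real.exp (-t ^ 2 / θ) * (-(2 * t) / θ) * (-(2 * t) / θ)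
          + Real.exp (-t ^ 2 / θ) * (-2 / θ) + 2 / θ
        = (Real.exp (-t ^ 2 / θ) * (4 * t ^ 2)
          + 2 * θ * (1 - Real.exp (-t ^ 2 / θ))) / θ ^ 2 := by
      field_simp
      ring
    rw [heq]
    apply div_nonneg _ (by positivity)
    have h1 : 0 ≤ Real.exp (-t ^ 2 / θ) * (4 * t ^ 2) := by positivity
    nlinarith

/-- tangent line inequality -/
private lemma tangent_aux (hθ : 0 < θ) (a b : ℝ) :
    Real.exp (-b ^ 2 / θ) + b ^ 2 / θ
      + (Real.exp (-b ^ 2 / θ) * (-(2 * b) / θ) + 2 * b / θ) * (a - b)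
      ≤ Real.exp (-a ^ 2 / θ) + a ^ 2 / θ := by
  set f := fun t : ℝ => Real.exp (-t ^ 2 / θ) + t ^ 2 / θ with hf
  have hc := convex_aux hθ
  rcases lt_trichotomy a b with h | h | h
  · have := hc.slope_le_of_hasDerivAt (Set.mem_univ a) (Set.mem_univ b) h (hasDerivAt_aux hθ b)
    rw [slope_def_field] at this
    have hba : 0 < b - a := by linarith
    rw [div_le_iff₀ hba] at this
    nlinarith [this]
  · simp [h]
  · have := hc.le_slope_of_hasDerivAt (Set.mem_univ b) (Set.mem_univ a) h (hasDerivAt_aux hθ b)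
    rw [slope_def_field] at this
    have hab : 0 < a - b := by linarith
    rw [le_div_iff₀ hab] at this
    nlinarith [this]

/-- key scalar lemma: with d = b - a, E_a ≥ E_b + E_b*(2b/θ)*d - d²/θ -/
private lemma key_aux (hθ : 0 < θ) (a b d : ℝ) (had : a = b - d) :
    Real.exp (-b ^ 2 / θ) + Real.exp (-b ^ 2 / θ) * (2 * b / θ) * d - d ^ 2 / θ
      ≤ Real.exp (-a ^ 2 / θ) := by
  have := tangent_aux hθ a b
  subst had
  ring_nf at this ⊢
  linarith

end scalar

section fderiv
variable {θ : ℝ} {n s : ℕ}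

/-- the linear map `v ↦ ∑ k, u i k * v k` -/
noncomputable def rowCLM (c : Fin s → ℝ) : (Fin s → ℝ) →L[ℝ] ℝ :=
  ∑ k, c k • ContinuousLinearMap.proj k

@[simp] lemma rowCLM_apply (c : Fin s → ℝ) (v : Fin s → ℝ) :
    rowCLM c v = ∑ k, c k * v k := by
  simp [rowCLM]

lemma hasFDerivAt_expSqObj (θ : ℝ) (y : Fin n → ℝ) (u : Fin n → Fin s → ℝ)
    (ω : Fin n → ℝ) (ζ₀ : Fin s → ℝ) :
    HasFDerivAt (expSqObj θ y u ω)
      (∑ i, (ω i * (Real.exp (-(y i - ∑ k, u i k * ζ₀ k) ^ 2 / θ)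
          * (2 * (y i - ∑ k, u i k * ζ₀ k) / θ))) • rowCLM (u i)) ζ₀ := by
  unfold expSqObj
  apply HasFDerivAt.fun_sum
  intro i _
  have hLi : HasFDerivAt (fun ζ : Fin s → ℝ => ∑ k, u i k * ζ k) (rowCLM (u i)) ζ₀ := by
    have : (fun ζ : Fin s → ℝ => ∑ k, u i k * ζ k) = rowCLM (u i) := by
      funext v; simp
    rw [this]
    exact (rowCLM (u i)).hasFDerivAt
  have hg : HasDerivAt (fun t : ℝ => ω i * Real.exp (-(y i - t) ^ 2 / θ))
      (ω i * (Real.exp (-(y i - ∑ k, u i k * ζ₀ k) ^ 2 / θ)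
        * (2 * (y i - ∑ k, u i k * ζ₀ k) / θ))) (∑ k, u i k * ζ₀ k) := by
    set t₀ := ∑ k, u i k * ζ₀ k
    have h0 : HasDerivAt (fun t : ℝ => y i - t) (-1) t₀ := (hasDerivAt_id t₀).const_sub (y i)
    have h1 : HasDerivAt (fun t : ℝ => -(y i - t) ^ 2 / θ) (2 * (y i - t₀) / θ) t₀ := by
      have : HasDerivAt (fun t : ℝ => -(y i - t) ^ 2 / θ)
          (-(((2 : ℕ) : ℝ) * (y i - t₀) ^ (2 - 1) * -1) / θ) t₀ :=
        ((h0.fun_pow 2).fun_neg.div_const θ)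
      convert this using 1
      ring
    simpa [mul_comm, mul_assoc, mul_left_comm] using (h1.exp.const_mul (ω i))
  exact (hg.comp_hasFDerivAt ζ₀ hLi :)

end fderiv

theorem exp_sq_objective_minorization
    (θ : ℝ) (hθ : 0 < θ) (n s : ℕ) (hs : 1 ≤ s)
    (y : Fin n → ℝ) (u : Fin n → Fin s → ℝ) (ω : Fin n → ℝ) (hω : ∀ i, 0 ≤ ω i) :
    ∀ ζ ζ₀ : Fin s → ℝ,
      expSqObj θ y u ω ζ ≥
        expSqObj θ y u ω ζ₀ + fderiv ℝ (expSqObj θ y u ω) ζ₀ (ζ - ζ₀)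
          - (1 / θ) * ∑ i, ω i * (∑ k, u i k * (ζ k - ζ₀ k)) ^ 2 := by
  intro ζ ζ₀
  have hfd := (hasFDerivAt_expSqObj θ y u ω ζ₀).fderiv
  rw [hfd]
  have happ : (∑ i, (ω i * (Real.exp (-(y i - ∑ k, u i k * ζ₀ k) ^ 2 / θ)
          * (2 * (y i - ∑ k, u i k * ζ₀ k) / θ))) • rowCLM (u i)) (ζ - ζ₀)
      = ∑ i, ω i * (Real.exp (-(y i - ∑ k, u i k * ζ₀ k) ^ 2 / θ)
          * (2 * (y i - ∑ k, u i k * ζ₀ k) / θ)) * (∑ k, u i k * (ζ k - ζ₀ k)) := by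
    simp [ContinuousLinearMap.sum_apply, Pi.sub_apply, smul_eq_mul]
  rw [happ]
  unfold expSqObj
  rw [ge_iff_le, Finset.mul_sum, ← Finset.sum_add_distrib, ← Finset.sum_sub_distrib]
  apply Finset.sum_le_sum
  intro i _
  have hab : y i - ∑ k, u i k * ζ k
      = (y i - ∑ k, u i k * ζ₀ k) - ∑ k, u i k * (ζ k - ζ₀ k) := by
    have h1 : ∑ k, u i k * (ζ k - ζ₀ k) = (∑ k, u i k * ζ k) - ∑ k, u i k * ζ₀ k := by
      rw [← Finset.sum_sub_distrib]
      exact Finset.sum_congr rfl fun k _ => by ring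
    rw [h1]; ring
  have hkey := mul_le_mul_of_nonneg_left
    (key_aux hθ (y i - ∑ k, u i k * ζ k) (y i - ∑ k, u i k * ζ₀ k)
      (∑ k, u i k * (ζ k - ζ₀ k)) hab) (hω i)
  ring_nf at hkey ⊢
  linarith
end

section
/- Let θ > 0, λ > 0, s ≥ 1, data y_i ∈ ℝ, u_i ∈ ℝ^s, ω_i ≥ 0 for i = 1,…,n, and let Q be the exponential squared objective and R(ζ) = Q(ζ) − λ Σ_{k=1}^s |ζ_k|. Let ζ^M ∈ ℝ^s, ρ > 0, V ≥ 0, r > 0 satisfy 6·V·r < ρ and 12·λ·√s < ρ·r. Assume (i) ∇Q(ζ^M)ᵀ v ≤ ρ r²/6 for every v ∈ ℝ^s with ‖v‖₂ = r, and (ii) vᵀ ∇²Q(ξ) v ≤ (−2ρ/3 + V·r)·r² for every ξ in the closed ball B̄(ζ^M, r) and every v with ‖v‖₂ = r. Then R(ζ) < R(ζ^M) for every ζ with ‖ζ − ζ^M‖₂ = r, and consequently every maximizer of R over the closed ball B̄(ζ^M, r) lies within Euclidean distance strictly less than r of ζ^M. -/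
open Finset

/-- The ℓ1-penalized exponential squared objective
`R(ζ) = Q(ζ) - λ ∑ k, |ζ k|`. -/
noncomputable def penExpSqObj (θ lam : ℝ) {n s : ℕ} (y : Fin n → ℝ)
    (u : Fin n → Fin s → ℝ) (ω : Fin n → ℝ) (ζ : Fin s → ℝ) : ℝ :=
  expSqObj θ y u ω ζ - lam * ∑ k, |ζ k|

lemma expSqObj_contDiff (θ : ℝ) {n s : ℕ} (y : Fin n → ℝ) (u : Fin n → Fin s → ℝ)
    (ω : Fin n → ℝ) : ContDiff ℝ 2 (expSqObj θ y u ω) := by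
  unfold expSqObj
  apply ContDiff.sum
  intro i _
  apply ContDiff.mul contDiff_const
  apply Real.contDiff_exp.comp
  apply ContDiff.div_const
  apply ContDiff.neg
  apply ContDiff.pow
  apply ContDiff.sub contDiff_const
  apply ContDiff.sum
  intro k _
  exact contDiff_const.mul (contDiff_apply ℝ ℝ k)

lemma decr_helper (φ φ' : ℝ → ℝ) (hφ : ∀ t, HasDerivAt φ (φ' t) t)
    (h : ∀ t ∈ Set.Icc (0:ℝ) 1, φ' t ≤ 0) : AntitoneOn φ (Set.Icc (0:ℝ) 1) := by
  apply antitoneOn_of_deriv_nonpos (convex_Icc 0 1)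
  · exact fun t _ => (hφ t).continuousAt.continuousWithinAt
  · exact fun t _ => (hφ t).differentiableAt.differentiableWithinAt
  · intro t ht
    rw [(hφ t).deriv]
    exact h t (interior_subset ht)

lemma taylor_bound {E : Type*} [NormedAddCommGroup E] [NormedSpace ℝ E]
    (f : E → ℝ) (hf : ContDiff ℝ 2 f) (a v : E) (A C : ℝ)
    (hA : fderiv ℝ f a v ≤ A)
    (hC : ∀ t ∈ Set.Icc (0:ℝ) 1, fderiv ℝ (fun z => fderiv ℝ f z v) (a + t • v) v ≤ C) :
    f (a + v) ≤ f a + A + C / 2 := by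
  have hf1 : Differentiable ℝ f := hf.differentiable (by norm_num)
  set F : E → ℝ := fun z => fderiv ℝ f z v with hFdef
  have hFc : ContDiff ℝ 1 F :=
    (hf.fderiv_right (m := 1) (by norm_num)).clm_apply contDiff_const
  have hF : Differentiable ℝ F := hFc.differentiable one_ne_zero
  have hline : ∀ t : ℝ, HasDerivAt (fun t : ℝ => a + t • v) v t := by
    intro t
    have := ((hasDerivAt_id t).smul_const v).const_add a
    simpa using this
  have hg : ∀ t : ℝ, HasDerivAt (fun t => f (a + t • v)) (F (a + t • v)) t :=
    fun t => (hf1 _).hasFDerivAt.comp_hasDerivAt t (hline t)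
  have hφ : ∀ t : ℝ, HasDerivAt (fun t => F (a + t • v)) (fderiv ℝ F (a + t • v) v) t :=
    fun t => (hF _).hasFDerivAt.comp_hasDerivAt t (hline t)
  have step1 : ∀ t ∈ Set.Icc (0:ℝ) 1, F (a + t • v) ≤ F a + C * t := by
    intro t ht
    have hd : ∀ σ : ℝ, HasDerivAt (fun σ : ℝ => F (a + σ • v) - C * σ)
        (fderiv ℝ F (a + σ • v) v - C) σ :=
      fun σ => (hφ σ).sub (by simpa using (hasDerivAt_id σ).const_mul C)
    have := decr_helper _ _ hd (fun σ hσ => by have := hC σ hσ; linarith)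
      (Set.left_mem_Icc.2 zero_le_one) ht ht.1
    simp only at this
    have ha0 : a + (0:ℝ) • v = a := by simp
    rw [ha0] at this
    linarith
  have hd2 : ∀ t : ℝ, HasDerivAt (fun t : ℝ => f (a + t • v) - F a * t - C * t ^ 2 / 2)
      (F (a + t • v) - F a - C * t) t := by
    intro t
    have h1 : HasDerivAt (fun t : ℝ => F a * t) (F a) t := by
      simpa using (hasDerivAt_id t).const_mul (F a)
    have h2 : HasDerivAt (fun t : ℝ => C * t ^ 2 / 2) (C * t) t := by
      have := ((hasDerivAt_pow 2 t).const_mul C).div_const 2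
      simpa using this.congr_deriv (by ring)
    exact ((hg t).sub h1).sub h2
  have := decr_helper _ _ hd2 (fun t ht => by have := step1 t ht; linarith)
    (Set.left_mem_Icc.2 zero_le_one) (Set.right_mem_Icc.2 zero_le_one) zero_le_one
  simp only at this
  have h1 : a + (1:ℝ) • v = a + v := by simp
  have h0 : a + (0:ℝ) • v = a := by simp
  rw [h1, h0] at this
  have : f (a + v) ≤ f a + F a + C / 2 := by linarith
  linarith

theorem penalized_maximizer_localization
    (θ lam : ℝ) (hθ : 0 < θ) (hlam : 0 < lam) (n s : ℕ) (hs : 1 ≤ s)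
    (y : Fin n → ℝ) (u : Fin n → Fin s → ℝ) (ω : Fin n → ℝ) (hω : ∀ i, 0 ≤ ω i)
    (ζM : Fin s → ℝ) (ρ V r : ℝ) (hρ : 0 < ρ) (hV : 0 ≤ V) (hr : 0 < r)
    (hVr : 6 * V * r < ρ) (hlams : 12 * lam * Real.sqrt s < ρ * r)
    (hgrad : ∀ v : Fin s → ℝ, Real.sqrt (∑ k, v k ^ 2) = r →
      fderiv ℝ (expSqObj θ y u ω) ζM v ≤ ρ * r ^ 2 / 6)
    (hhess : ∀ ξ : Fin s → ℝ, Real.sqrt (∑ k, (ξ k - ζM k) ^ 2) ≤ r →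
      ∀ v : Fin s → ℝ, Real.sqrt (∑ k, v k ^ 2) = r →
        fderiv ℝ (fun z => fderiv ℝ (expSqObj θ y u ω) z v) ξ v ≤
          (-(2 * ρ) / 3 + V * r) * r ^ 2) :
    (∀ ζ : Fin s → ℝ, Real.sqrt (∑ k, (ζ k - ζM k) ^ 2) = r →
      penExpSqObj θ lam y u ω ζ < penExpSqObj θ lam y u ω ζM) ∧
    (∀ ζhat : Fin s → ℝ, Real.sqrt (∑ k, (ζhat k - ζM k) ^ 2) ≤ r →
      (∀ ζ : Fin s → ℝ, Real.sqrt (∑ k, (ζ k - ζM k) ^ 2) ≤ r →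
        penExpSqObj θ lam y u ω ζ ≤ penExpSqObj θ lam y u ω ζhat) →
      Real.sqrt (∑ k, (ζhat k - ζM k) ^ 2) < r) := by
  have part1 : ∀ ζ : Fin s → ℝ, Real.sqrt (∑ k, (ζ k - ζM k) ^ 2) = r →
      penExpSqObj θ lam y u ω ζ < penExpSqObj θ lam y u ω ζM := by
    intro ζ hζ
    set v : Fin s → ℝ := fun k => ζ k - ζM k with hvdef
    have hv : Real.sqrt (∑ k, v k ^ 2) = r := hζ
    have hsum_nonneg : (0:ℝ) ≤ ∑ k, v k ^ 2 :=
      Finset.sum_nonneg fun k _ => sq_nonneg _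
    have hvsum : ∑ k, v k ^ 2 = r ^ 2 := by
      rw [← hv]; exact (Real.sq_sqrt hsum_nonneg).symm
    -- Hessian bound along segment
    set C : ℝ := (-(2 * ρ) / 3 + V * r) * r ^ 2 with hCdef
    have hC : ∀ t ∈ Set.Icc (0:ℝ) 1,
        fderiv ℝ (fun z => fderiv ℝ (expSqObj θ y u ω) z v) (ζM + t • v) v ≤ C := by
      intro t ht
      apply hhess
      · have hc : ∀ k, (ζM + t • v) k - ζM k = t * v k := by
          intro k; simp [Pi.add_apply, Pi.smul_apply, smul_eq_mul]
        have : ∑ k, ((ζM + t • v) k - ζM k) ^ 2 = (t * r) ^ 2 := by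
          simp only [hc]
          have he : ∑ x : Fin s, (t * v x) ^ 2 = t ^ 2 * ∑ x, v x ^ 2 := by
            rw [Finset.mul_sum]
            exact Finset.sum_congr rfl fun x _ => by ring
          rw [he, hvsum]; ring
        rw [this, Real.sqrt_sq (mul_nonneg ht.1 hr.le)]
        nlinarith [ht.2, hr]
      · exact hv
    have hQ : expSqObj θ y u ω (ζM + v) ≤
        expSqObj θ y u ω ζM + ρ * r ^ 2 / 6 + C / 2 :=
      taylor_bound _ (expSqObj_contDiff θ y u ω) ζM v _ _ (hgrad v hv) hC
    have hζeq : ζM + v = ζ := by funext k; simp [hvdef]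
    rw [hζeq] at hQ
    -- Penalty bound
    have habs : ∑ k, |ζM k| - ∑ k, |ζ k| ≤ ∑ k, |v k| := by
      rw [← Finset.sum_sub_distrib]
      apply Finset.sum_le_sum
      intro k _
      have := abs_sub_abs_le_abs_sub (ζM k) (ζ k)
      have h2 : |ζM k - ζ k| = |v k| := by rw [hvdef]; rw [abs_sub_comm]
      linarith [this, h2.le]
    have hcs : ∑ k, |v k| ≤ Real.sqrt s * r := by
      have h1 : (∑ k, |v k|) ^ 2 ≤ (s : ℝ) * ∑ k, v k ^ 2 := by
        have := sq_sum_le_card_mul_sum_sq (s := (Finset.univ : Finset (Fin s)))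
          (f := fun k => |v k|)
        simpa [sq_abs] using this
      have h2 : ∑ k, |v k| ≤ Real.sqrt ((s : ℝ) * r ^ 2) := by
        rw [← Real.sqrt_sq (Finset.sum_nonneg fun k _ => abs_nonneg _)]
        apply Real.sqrt_le_sqrt
        rw [← hvsum]; exact h1
      rwa [Real.sqrt_mul (Nat.cast_nonneg s), Real.sqrt_sq hr.le] at h2
    have hpen : lam * (∑ k, |ζM k| - ∑ k, |ζ k|) ≤ lam * (Real.sqrt s * r) :=
      mul_le_mul_of_nonneg_left (le_trans habs hcs) hlam.le
    have hlsr : lam * (Real.sqrt s * r) < ρ * r ^ 2 / 12 := by nlinarith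
    unfold penExpSqObj
    have hCval : C = (-(2 * ρ) / 3 + V * r) * r ^ 2 := rfl
    nlinarith [hQ, hpen, hlsr, hVr, hr, sq_nonneg r, mul_pos hr hr]
  refine ⟨part1, ?_⟩
  intro ζhat hle hmax
  rcases lt_or_eq_of_le hle with h | h
  · exact h
  · exfalso
    have h1 := part1 ζhat h
    have h2 : Real.sqrt (∑ k, (ζM k - ζM k) ^ 2) ≤ r := by
      simp; exact hr.le
    have := hmax ζM h2
    linarith
end
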